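/- Let n = 2m-1 be odd, m ≥ 3, and embed the dihedral group W of order 2n into Sym(n) by r₀ ↦ ∏_{i even, 0<i<n}(i,i+1), r₁ ↦ ∏_{i odd, 0<i<n}(i,i+1). Acting on sets of positive roots of A_{n-1} (negating negative roots), the orbit of Y₀ = {α_{2t} : 1 ≤ t ≤ m-1} has exactly 2m-1 = n elements, and the stabilizer of Y₀ is ⟨r₀⟩. -/

import Mathlib

namespace OrbStab

/-- The bijection from `ZMod (2*m-1)` to `{1, ..., 2*m-1}` realizing the dihedral labels. -/
def dI (m : ℕ) (k : ZMod (2 * m - 1)) : ℕ :=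
  if k.val ≤ m - 1 then 2 * k.val + 1 else 2 * ((2 * m - 1) - k.val)

/-- The candidate orbit sets. -/
def YF (m : ℕ) (k : ZMod (2 * m - 1)) : Set (Sym2 ℕ) :=
  {p | ∃ t : ZMod (2 * m - 1), t ≠ 0 ∧ p = s(dI m (k + t), dI m (k - t))}

def Rot (m : ℕ) (w : Equiv.Perm ℕ) (k : ZMod (2 * m - 1)) : Prop :=
  ∀ j, w (dI m j) = dI m (j + k)

def Refl (m : ℕ) (w : Equiv.Perm ℕ) (k : ZMod (2 * m - 1)) : Prop :=
  ∀ j, w (dI m j) = dI m (-j + k)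

def Good (m : ℕ) (w : Equiv.Perm ℕ) : Prop :=
  (∀ a, a = 0 ∨ 2 * m - 1 < a → w a = a) ∧ ∃ k, Rot m w k ∨ Refl m w k

section
variable {m : ℕ} [NeZero (2 * m - 1)]

lemma cast_val (k : ZMod (2 * m - 1)) : ((k.val : ℕ) : ZMod (2 * m - 1)) = k := by
  rw [ZMod.natCast_val, ZMod.cast_id]

lemma dI_inj (hm : 3 ≤ m) : Function.Injective (dI m) := by
  intro a b h
  have ha := ZMod.val_lt a; have hb := ZMod.val_lt b
  have : a.val = b.val := by unfold dI at h; split_ifs at h <;> omega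
  exact ZMod.val_injective _ this

lemma dI_surj (hm : 3 ≤ m) (a : ℕ) (h1 : 1 ≤ a) (h2 : a ≤ 2 * m - 1) :
    ∃ k, dI m k = a := by
  rcases Nat.even_or_odd a with he | ho
  · obtain ⟨s, hs⟩ := he
    refine ⟨((2 * m - 1 - s : ℕ) : ZMod (2 * m - 1)), ?_⟩
    have hv : ((2 * m - 1 - s : ℕ) : ZMod (2 * m - 1)).val = 2 * m - 1 - s :=
      ZMod.val_cast_of_lt (by omega)
    unfold dI; rw [hv]; split_ifs <;> omega
  · obtain ⟨s, hs⟩ := ho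
    refine ⟨((s : ℕ) : ZMod (2 * m - 1)), ?_⟩
    have hv : ((s : ℕ) : ZMod (2 * m - 1)).val = s := ZMod.val_cast_of_lt (by omega)
    unfold dI; rw [hv]; split_ifs <;> omega

variable {r0 r1 : Equiv.Perm ℕ}

lemma r0_dI (hm : 3 ≤ m)
    (hr0 : ∀ a : ℕ, r0 a =
      if Even a ∧ 2 ≤ a ∧ a ≤ 2 * m - 2 then a + 1
      else if Odd a ∧ 3 ≤ a ∧ a ≤ 2 * m - 1 then a - 1 else a)
    (k : ZMod (2 * m - 1)) : r0 (dI m k) = dI m (-k) := by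
  rcases eq_or_ne k 0 with rfl | hk
  · rw [neg_zero]
    rw [hr0]
    unfold dI; rw [ZMod.val_zero]
    simp only [Nat.even_iff, Nat.odd_iff]
    split_ifs <;> omega
  · have hv : (-k).val = 2 * m - 1 - k.val := by rw [ZMod.neg_val, if_neg hk]
    have hlt := ZMod.val_lt k
    have hne : k.val ≠ 0 := by rwa [Ne, ZMod.val_eq_zero]
    rw [hr0]
    unfold dI; rw [hv]
    simp only [Nat.even_iff, Nat.odd_iff]
    split_ifs <;> omega

lemma r1_dI (hm : 3 ≤ m)
    (hr1 : ∀ a : ℕ, r1 a =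
      if Odd a ∧ 1 ≤ a ∧ a ≤ 2 * m - 3 then a + 1
      else if Even a ∧ 2 ≤ a ∧ a ≤ 2 * m - 2 then a - 1 else a)
    (k : ZMod (2 * m - 1)) : r1 (dI m k) = dI m (-k - 1) := by
  have hlt := ZMod.val_lt k
  have h1 : ((2 * m - 1 - 1 - k.val : ℕ) : ZMod (2 * m - 1)) = -k - 1 := by
    rw [Nat.cast_sub (by omega : k.val ≤ 2 * m - 1 - 1),
      Nat.cast_sub (by omega : 1 ≤ 2 * m - 1)]
    rw [ZMod.natCast_self, cast_val]
    push_cast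
    ring
  have hv : (-k - 1).val = 2 * m - 1 - 1 - k.val := by
    rw [← h1, ZMod.val_cast_of_lt (by omega)]
  rw [hr1]
  unfold dI; rw [hv]
  simp only [Nat.even_iff, Nat.odd_iff]
  split_ifs <;> omega

lemma r0_off (hm : 3 ≤ m)
    (hr0 : ∀ a : ℕ, r0 a =
      if Even a ∧ 2 ≤ a ∧ a ≤ 2 * m - 2 then a + 1
      else if Odd a ∧ 3 ≤ a ∧ a ≤ 2 * m - 1 then a - 1 else a)
    (a : ℕ) (h : a = 0 ∨ 2 * m - 1 < a) : r0 a = a := by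
  rw [hr0]; simp only [Nat.even_iff, Nat.odd_iff]; split_ifs <;> omega

lemma r1_off (hm : 3 ≤ m)
    (hr1 : ∀ a : ℕ, r1 a =
      if Odd a ∧ 1 ≤ a ∧ a ≤ 2 * m - 3 then a + 1
      else if Even a ∧ 2 ≤ a ∧ a ≤ 2 * m - 2 then a - 1 else a)
    (a : ℕ) (h : a = 0 ∨ 2 * m - 1 < a) : r1 a = a := by
  rw [hr1]; simp only [Nat.even_iff, Nat.odd_iff]; split_ifs <;> omega

lemma good_closure (hm : 3 ≤ m)
    (hr0 : ∀ a : ℕ, r0 a =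
      if Even a ∧ 2 ≤ a ∧ a ≤ 2 * m - 2 then a + 1
      else if Odd a ∧ 3 ≤ a ∧ a ≤ 2 * m - 1 then a - 1 else a)
    (hr1 : ∀ a : ℕ, r1 a =
      if Odd a ∧ 1 ≤ a ∧ a ≤ 2 * m - 3 then a + 1
      else if Even a ∧ 2 ≤ a ∧ a ≤ 2 * m - 2 then a - 1 else a) :
    ∀ w ∈ Subgroup.closure ({r0, r1} : Set (Equiv.Perm ℕ)), Good m w := by
  intro w hw
  induction hw using Subgroup.closure_induction with
  | mem x hx =>
    rcases hx with rfl | rfl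
    · exact ⟨r0_off hm hr0, 0, Or.inr fun j => by
        rw [r0_dI hm hr0]; congr 1; ring⟩
    · exact ⟨r1_off hm hr1, -1, Or.inr fun j => by
        rw [r1_dI hm hr1]; congr 1; ring⟩
  | one => exact ⟨fun a _ => rfl, 0, Or.inl fun j => by simp⟩
  | mul x y hx hy ihx ihy =>
    refine ⟨fun a ha => by
      rw [Equiv.Perm.mul_apply, ihy.1 a ha, ihx.1 a ha], ?_⟩
    obtain ⟨kx, hxx⟩ := ihx.2; obtain ⟨ky, hyy⟩ := ihy.2
    rcases hxx with hx1 | hx1 <;> rcases hyy with hy1 | hy1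
    · exact ⟨ky + kx, Or.inl fun j => by
        rw [Equiv.Perm.mul_apply, hy1, hx1]; congr 1; ring⟩
    · exact ⟨ky + kx, Or.inr fun j => by
        rw [Equiv.Perm.mul_apply, hy1, hx1]; congr 1; ring⟩
    · exact ⟨kx - ky, Or.inr fun j => by
        rw [Equiv.Perm.mul_apply, hy1, hx1]; congr 1; ring⟩
    · exact ⟨kx - ky, Or.inl fun j => by
        rw [Equiv.Perm.mul_apply, hy1, hx1]; congr 1; ring⟩
  | inv x hx ih =>
    refine ⟨fun a ha => ?_, ?_⟩
    · conv_lhs => rw [← ih.1 a ha]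
      exact Equiv.Perm.inv_eq_iff_eq.mpr rfl
    · obtain ⟨k, hk | hk⟩ := ih.2
      · refine ⟨-k, Or.inl fun j => ?_⟩
        have h2 : x (dI m (j + -k)) = dI m j := by rw [hk]; congr 1; ring
        rw [← h2]; exact Equiv.Perm.inv_eq_iff_eq.mpr rfl
      · refine ⟨k, Or.inr fun j => ?_⟩
        have h2 : x (dI m (-j + k)) = dI m j := by rw [hk]; congr 1; ring
        rw [← h2]; exact Equiv.Perm.inv_eq_iff_eq.mpr rfl

lemma image_rot {w : Equiv.Perm ℕ} {k : ZMod (2 * m - 1)} (hw : Rot m w k)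
    (k0 : ZMod (2 * m - 1)) : Sym2.map ⇑w '' YF m k0 = YF m (k0 + k) := by
  ext p
  constructor
  · rintro ⟨q, ⟨t, ht, rfl⟩, rfl⟩
    refine ⟨t, ht, ?_⟩
    rw [Sym2.map_pair_eq, hw, hw, Sym2.eq_iff]
    left
    exact ⟨by congr 1; ring, by congr 1; ring⟩
  · rintro ⟨t, ht, rfl⟩
    refine ⟨s(dI m (k0 + t), dI m (k0 - t)), ⟨t, ht, rfl⟩, ?_⟩
    rw [Sym2.map_pair_eq, hw, hw, Sym2.eq_iff]
    left
    exact ⟨by congr 1; ring, by congr 1; ring⟩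

lemma image_refl {w : Equiv.Perm ℕ} {k : ZMod (2 * m - 1)} (hw : Refl m w k)
    (k0 : ZMod (2 * m - 1)) : Sym2.map ⇑w '' YF m k0 = YF m (k - k0) := by
  ext p
  constructor
  · rintro ⟨q, ⟨t, ht, rfl⟩, rfl⟩
    refine ⟨t, ht, ?_⟩
    rw [Sym2.map_pair_eq, hw, hw, Sym2.eq_iff]
    right
    exact ⟨by congr 1; ring, by congr 1; ring⟩
  · rintro ⟨t, ht, rfl⟩
    refine ⟨s(dI m (k0 + t), dI m (k0 - t)), ⟨t, ht, rfl⟩, ?_⟩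
    rw [Sym2.map_pair_eq, hw, hw, Sym2.eq_iff]
    right
    exact ⟨by congr 1; ring, by congr 1; ring⟩

lemma YF_inj (hm : 3 ≤ m) : Function.Injective (YF m) := by
  intro a b h
  haveI : Fact (1 < 2 * m - 1) := ⟨by omega⟩
  have hmem : s(dI m (a + 1), dI m (a - 1)) ∈ YF m b := by
    rw [← h]; exact ⟨1, one_ne_zero, rfl⟩
  obtain ⟨t, ht, hp⟩ := hmem
  have h2 : IsUnit (2 : ZMod (2 * m - 1)) := by
    have hc : ((2 : ℕ) : ZMod (2 * m - 1)) = 2 := by push_cast; ring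
    rw [← hc, ZMod.isUnit_iff_coprime]
    rw [Nat.Prime.coprime_iff_not_dvd Nat.prime_two]
    omega
  rw [Sym2.eq_iff] at hp
  rcases hp with ⟨e1, e2⟩ | ⟨e1, e2⟩ <;>
  · have f1 := dI_inj hm e1
    have f2 := dI_inj hm e2
    exact h2.mul_left_cancel (by linear_combination f1 + f2)

lemma Y0_eq (hm : 3 ≤ m) :
    {p : Sym2 ℕ | ∃ t : ℕ, 1 ≤ t ∧ t ≤ m - 1 ∧ p = s(2 * t, 2 * t + 1)} = YF m 0 := by
  ext p
  simp only [Set.mem_setOf_eq, YF]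
  constructor
  · rintro ⟨t, h1, h2, rfl⟩
    have hv : ((t : ℕ) : ZMod (2 * m - 1)).val = t := ZMod.val_cast_of_lt (by omega)
    refine ⟨((t : ℕ) : ZMod (2 * m - 1)), ?_, ?_⟩
    · intro h0; rw [h0, ZMod.val_zero] at hv; omega
    · have hne : ((t : ℕ) : ZMod (2 * m - 1)) ≠ 0 := by
        intro h0; rw [h0, ZMod.val_zero] at hv; omega
      have hnv : (-((t : ℕ) : ZMod (2 * m - 1))).val = 2 * m - 1 - t := by
        rw [ZMod.neg_val, if_neg hne, hv]
      rw [zero_add, zero_sub]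
      unfold dI; rw [hv, hnv, Sym2.eq_iff]
      split_ifs <;> omega
  · rintro ⟨t, ht, rfl⟩
    have hvlt := ZMod.val_lt t
    have hv1 : t.val ≠ 0 := by rwa [Ne, ZMod.val_eq_zero]
    have hnv : (-t).val = 2 * m - 1 - t.val := by rw [ZMod.neg_val, if_neg ht]
    rw [zero_add, zero_sub]
    rcases le_or_gt t.val (m - 1) with h | h
    · refine ⟨t.val, by omega, by omega, ?_⟩
      unfold dI; rw [hnv, Sym2.eq_iff]
      split_ifs <;> omega
    · refine ⟨2 * m - 1 - t.val, by omega, by omega, ?_⟩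
      unfold dI; rw [hnv, Sym2.eq_iff]
      split_ifs <;> omega

lemma reach (hm : 3 ≤ m)
    (hr0 : ∀ a : ℕ, r0 a =
      if Even a ∧ 2 ≤ a ∧ a ≤ 2 * m - 2 then a + 1
      else if Odd a ∧ 3 ≤ a ∧ a ≤ 2 * m - 1 then a - 1 else a)
    (hr1 : ∀ a : ℕ, r1 a =
      if Odd a ∧ 1 ≤ a ∧ a ≤ 2 * m - 3 then a + 1
      else if Even a ∧ 2 ≤ a ∧ a ≤ 2 * m - 2 then a - 1 else a)
    (k : ZMod (2 * m - 1)) :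
    ∃ w ∈ Subgroup.closure ({r0, r1} : Set (Equiv.Perm ℕ)),
      Sym2.map ⇑w '' YF m 0 = YF m k := by
  have hrot : Rot m (r0 * r1) 1 := by
    intro j
    rw [Equiv.Perm.mul_apply, r1_dI hm hr1, r0_dI hm hr0]
    congr 1; ring
  have main : ∀ s : ℕ, ∃ w ∈ Subgroup.closure ({r0, r1} : Set (Equiv.Perm ℕ)),
      Sym2.map ⇑w '' YF m 0 = YF m ((s : ℕ) : ZMod (2 * m - 1)) := by
    intro s
    induction s with
    | zero =>
      refine ⟨1, one_mem _, ?_⟩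
      have h1 : Rot m (1 : Equiv.Perm ℕ) 0 := fun j => by simp
      rw [image_rot h1 0]
      norm_num
    | succ s ih =>
      obtain ⟨w, hw, him⟩ := ih
      refine ⟨(r0 * r1) * w,
        mul_mem (mul_mem (Subgroup.subset_closure (by simp))
          (Subgroup.subset_closure (by simp))) hw, ?_⟩
      have hcomp : Sym2.map (⇑(r0 * r1) ∘ ⇑w) = Sym2.map ⇑(r0 * r1) ∘ Sym2.map ⇑w :=
        funext fun q => (Sym2.map_map q).symm
      rw [Equiv.Perm.coe_mul, hcomp, Set.image_comp, him, image_rot hrot]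
      congr 1
      push_cast
      ring
  obtain ⟨w, hw, him⟩ := main k.val
  exact ⟨w, hw, by rw [him, cast_val]⟩

end

end OrbStab

theorem orbit_and_stabilizer_odd_case (m : ℕ) (hm : 3 ≤ m) (r0 r1 : Equiv.Perm ℕ)
    (hr0 : ∀ a : ℕ, r0 a =
      if Even a ∧ 2 ≤ a ∧ a ≤ 2 * m - 2 then a + 1
      else if Odd a ∧ 3 ≤ a ∧ a ≤ 2 * m - 1 then a - 1 else a)
    (hr1 : ∀ a : ℕ, r1 a =
      if Odd a ∧ 1 ≤ a ∧ a ≤ 2 * m - 3 then a + 1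
      else if Even a ∧ 2 ≤ a ∧ a ≤ 2 * m - 2 then a - 1 else a)
    (Y0 : Set (Sym2 ℕ))
    (hY0 : Y0 = {p | ∃ t : ℕ, 1 ≤ t ∧ t ≤ m - 1 ∧ p = s(2 * t, 2 * t + 1)}) :
    {B : Set (Sym2 ℕ) |
        ∃ w ∈ Subgroup.closure ({r0, r1} : Set (Equiv.Perm ℕ)),
          B = Sym2.map ⇑w '' Y0}.ncard = 2 * m - 1 ∧
    {w : Equiv.Perm ℕ |
        w ∈ Subgroup.closure ({r0, r1} : Set (Equiv.Perm ℕ)) ∧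
          Sym2.map ⇑w '' Y0 = Y0}
      = (Subgroup.closure ({r0} : Set (Equiv.Perm ℕ)) : Set (Equiv.Perm ℕ)) := by
  haveI : NeZero (2 * m - 1) := ⟨by omega⟩
  have hY : Y0 = OrbStab.YF m 0 := by rw [hY0]; exact OrbStab.Y0_eq hm
  have horb : {B : Set (Sym2 ℕ) |
      ∃ w ∈ Subgroup.closure ({r0, r1} : Set (Equiv.Perm ℕ)),
        B = Sym2.map ⇑w '' Y0} = Set.range (OrbStab.YF m) := by
    ext B
    simp only [Set.mem_setOf_eq, Set.mem_range]
    constructor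
    · rintro ⟨w, hw, rfl⟩
      obtain ⟨-, k, hk | hk⟩ := OrbStab.good_closure hm hr0 hr1 w hw
      · exact ⟨0 + k, by rw [hY, OrbStab.image_rot hk 0]⟩
      · exact ⟨k - 0, by rw [hY, OrbStab.image_refl hk 0]⟩
    · rintro ⟨k, rfl⟩
      obtain ⟨w, hw, him⟩ := OrbStab.reach hm hr0 hr1 k
      exact ⟨w, hw, by rw [hY, him]⟩
  constructor
  · rw [horb, ← Set.image_univ, Set.ncard_image_of_injective _ (OrbStab.YF_inj hm),
      Set.ncard_univ, Nat.card_zmod]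
  · ext w
    simp only [Set.mem_setOf_eq, SetLike.mem_coe]
    constructor
    · rintro ⟨hw, hst⟩
      obtain ⟨hoff, k, hk | hk⟩ := OrbStab.good_closure hm hr0 hr1 w hw
      · have he : OrbStab.YF m (0 + k) = OrbStab.YF m 0 := by
          rw [← OrbStab.image_rot hk 0, ← hY, hst, hY]
        have hk0 : k = 0 := by simpa using OrbStab.YF_inj hm he
        have hw1 : w = 1 := by
          ext a
          by_cases ha : a = 0 ∨ 2 * m - 1 < a
          · rw [hoff a ha]; rfl
          · push_neg at ha
            obtain ⟨j, rfl⟩ := OrbStab.dI_surj hm a (by omega) (by omega)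
            rw [hk j, hk0, add_zero]; rfl
        rw [hw1]; exact one_mem _
      · have he : OrbStab.YF m (k - 0) = OrbStab.YF m 0 := by
          rw [← OrbStab.image_refl hk 0, ← hY, hst, hY]
        have hk0 : k = 0 := by simpa using OrbStab.YF_inj hm he
        have hw1 : w = r0 := by
          ext a
          by_cases ha : a = 0 ∨ 2 * m - 1 < a
          · rw [hoff a ha, OrbStab.r0_off hm hr0 a ha]
          · push_neg at ha
            obtain ⟨j, rfl⟩ := OrbStab.dI_surj hm a (by omega) (by omega)
            rw [hk j, OrbStab.r0_dI hm hr0, hk0, add_zero]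
        rw [hw1]; exact Subgroup.subset_closure rfl
    · intro hw
      have hsub : Subgroup.closure ({r0} : Set (Equiv.Perm ℕ)) ≤
          Subgroup.closure ({r0, r1} : Set (Equiv.Perm ℕ)) :=
        Subgroup.closure_mono (by simp)
      refine ⟨hsub hw, ?_⟩
      induction hw using Subgroup.closure_induction with
      | mem x hx =>
        rw [Set.mem_singleton_iff] at hx
        rw [hx]
        have hrefl : OrbStab.Refl m r0 0 := fun j => by
          rw [OrbStab.r0_dI hm hr0]; congr 1; ring
        rw [hY, OrbStab.image_refl hrefl 0]
        norm_num
      | one =>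
        have h1 : OrbStab.Rot m (1 : Equiv.Perm ℕ) 0 := fun j => by simp
        rw [hY, OrbStab.image_rot h1 0]
        norm_num
      | mul x y hx hy ihx ihy =>
        have hcomp : Sym2.map (⇑x ∘ ⇑y) = Sym2.map ⇑x ∘ Sym2.map ⇑y :=
          funext fun q => (Sym2.map_map q).symm
        rw [Equiv.Perm.coe_mul, hcomp, Set.image_comp, ihy, ihx]
      | inv x hx ih =>
        have hid : ⇑x⁻¹ ∘ ⇑x = id := funext fun a => Equiv.Perm.inv_eq_iff_eq.mpr rfl
        have h2 : Sym2.map ⇑x⁻¹ '' (Sym2.map ⇑x '' Y0) = Y0 := by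
          rw [← Set.image_comp]
          have hcomp : Sym2.map ⇑x⁻¹ ∘ Sym2.map ⇑x = id := by
            funext q
            rw [Function.comp_apply, Sym2.map_map, hid, Sym2.map_id, id_eq]
          rw [hcomp, Set.image_id]
        rwa [ih] at h2
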